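/- Let B be an (I)-generating subset of B_{X*} for a real Banach space X, and let (x_n) be a bounded sequence in X such that (x*(x_n))_n is statistically pre-Cauchy for every x* ∈ B. Then (x*(x_n))_n is statistically pre-Cauchy for every x* ∈ X*. -/

import Mathlib

open Filter NormedSpace

/-- The weak*-closed convex hull of a set of functionals. -/
noncomputable def wstarClConvHull {X : Type*} [NormedAddCommGroup X] [NormedSpace ℝ X]
    (S : Set (StrongDual ℝ X)) : Set (StrongDual ℝ X) :=
  ⇑StrongDual.toWeakDual ⁻¹' closure (convexHull ℝ (⇑StrongDual.toWeakDual '' S))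

/-- `B` (I)-generates `K` if, whenever `B` is written as a countable union
`B = ⋃ₙ Bₙ`, `K` is the norm-closed convex hull of the union of the
weak*-closed convex hulls of the `Bₙ`. -/
def IGenerates {X : Type*} [NormedAddCommGroup X] [NormedSpace ℝ X]
    (B K : Set (StrongDual ℝ X)) : Prop :=
  ∀ Bn : ℕ → Set (StrongDual ℝ X), B = ⋃ n, Bn n →
    K = closure (convexHull ℝ (⋃ n, wstarClConvHull (Bn n)))

/-- A real sequence is statistically pre-Cauchy if for every `ε > 0` the
proportion of pairs `(i,j) ∈ {1,…,n}²` with `|s_i − s_j| ≥ ε` tends to `0`. -/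
def StatPreCauchy (s : ℕ → ℝ) : Prop :=
  ∀ ε > 0, Tendsto
    (fun n : ℕ =>
      ((((Finset.Icc 1 n) ×ˢ (Finset.Icc 1 n)).filter
        (fun ij => ε ≤ |s ij.1 - s ij.2|)).card : ℝ) / (n : ℝ) ^ 2)
    atTop (nhds 0)

section Aux

open Finset

variable {X : Type*} [NormedAddCommGroup X] [NormedSpace ℝ X]

@[simp] lemma tw_apply' (f : StrongDual ℝ X) (y : X) : StrongDual.toWeakDual f y = f y := rfl

/-- The averaged pairwise difference functional. -/
noncomputable def gW (x : ℕ → X) (n : ℕ) (f : WeakDual ℝ X) : ℝ :=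
  (∑ ij ∈ Finset.Icc 1 n ×ˢ Finset.Icc 1 n, |f (x ij.1) - f (x ij.2)|) / (n : ℝ) ^ 2

lemma gW_nonneg (x : ℕ → X) (n : ℕ) (f : WeakDual ℝ X) : 0 ≤ gW x n f :=
  div_nonneg (sum_nonneg fun _ _ => abs_nonneg _) (by positivity)

lemma gW_continuous (x : ℕ → X) (n : ℕ) : Continuous (gW x n) := by
  apply Continuous.div_const
  exact continuous_finset_sum _ fun ij _ =>
    ((WeakDual.eval_continuous (x ij.1)).sub (WeakDual.eval_continuous (x ij.2))).abs

lemma gW_convex_ineq (x : ℕ → X) (n : ℕ) (f g : WeakDual ℝ X) (a b : ℝ)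
    (ha : 0 ≤ a) (hb : 0 ≤ b) :
    gW x n (a • f + b • g) ≤ a * gW x n f + b * gW x n g := by
  rcases Nat.eq_zero_or_pos n with rfl | hn
  · simp [gW]
  have hn2 : (0:ℝ) < (n:ℝ) ^ 2 := by positivity
  have hsum : ∑ ij ∈ Finset.Icc 1 n ×ˢ Finset.Icc 1 n,
      |(a • f + b • g) (x ij.1) - (a • f + b • g) (x ij.2)|
      ≤ a * ∑ ij ∈ Finset.Icc 1 n ×ˢ Finset.Icc 1 n, |f (x ij.1) - f (x ij.2)|
        + b * ∑ ij ∈ Finset.Icc 1 n ×ˢ Finset.Icc 1 n, |g (x ij.1) - g (x ij.2)| := by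
    rw [mul_sum, mul_sum, ← sum_add_distrib]
    refine sum_le_sum fun ij _ => ?_
    have h1 : ∀ y : X, (a • f + b • g) y = a * f y + b * g y := fun y => rfl
    rw [h1, h1]
    calc |a * f (x ij.1) + b * g (x ij.1) - (a * f (x ij.2) + b * g (x ij.2))|
        = |a * (f (x ij.1) - f (x ij.2)) + b * (g (x ij.1) - g (x ij.2))| := by ring_nf
      _ ≤ |a * (f (x ij.1) - f (x ij.2))| + |b * (g (x ij.1) - g (x ij.2))| := abs_add_le _ _
      _ = a * |f (x ij.1) - f (x ij.2)| + b * |g (x ij.1) - g (x ij.2)| := by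
          rw [abs_mul, abs_mul, abs_of_nonneg ha, abs_of_nonneg hb]
  unfold gW
  calc (∑ ij ∈ Finset.Icc 1 n ×ˢ Finset.Icc 1 n,
        |(a • f + b • g) (x ij.1) - (a • f + b • g) (x ij.2)|) / (n:ℝ)^2
      ≤ (a * ∑ ij ∈ Finset.Icc 1 n ×ˢ Finset.Icc 1 n, |f (x ij.1) - f (x ij.2)|
        + b * ∑ ij ∈ Finset.Icc 1 n ×ˢ Finset.Icc 1 n, |g (x ij.1) - g (x ij.2)|) / (n:ℝ)^2 := by
        gcongr
    _ = a * ((∑ ij ∈ Finset.Icc 1 n ×ˢ Finset.Icc 1 n, |f (x ij.1) - f (x ij.2)|) / (n:ℝ)^2)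
        + b * ((∑ ij ∈ Finset.Icc 1 n ×ˢ Finset.Icc 1 n, |g (x ij.1) - g (x ij.2)|) / (n:ℝ)^2) := by
        ring

lemma gW_lip (x : ℕ → X) (R : ℝ) (hR : ∀ n, ‖x n‖ ≤ R) (hR0 : 0 ≤ R) (n : ℕ)
    (f g : StrongDual ℝ X) :
    gW x n (StrongDual.toWeakDual f) ≤ gW x n (StrongDual.toWeakDual g) + 2 * R * ‖f - g‖ := by
  rcases Nat.eq_zero_or_pos n with rfl | hn
  · simp [gW]; positivity
  have hn2 : (0:ℝ) < (n:ℝ) ^ 2 := by positivity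
  have hterm : ∀ k, |f (x k) - g (x k)| ≤ R * ‖f - g‖ := by
    intro k
    have h1 := (f - g).le_opNorm (x k)
    rw [ContinuousLinearMap.sub_apply] at h1
    calc |f (x k) - g (x k)| = ‖f (x k) - g (x k)‖ := (Real.norm_eq_abs _).symm
      _ ≤ ‖f - g‖ * ‖x k‖ := h1
      _ ≤ ‖f - g‖ * R := by gcongr; exact hR k
      _ = R * ‖f - g‖ := mul_comm _ _
  have hsum : ∑ ij ∈ Finset.Icc 1 n ×ˢ Finset.Icc 1 n, |f (x ij.1) - f (x ij.2)|
      ≤ (∑ ij ∈ Finset.Icc 1 n ×ˢ Finset.Icc 1 n, |g (x ij.1) - g (x ij.2)|)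
        + (n:ℝ)^2 * (2 * R * ‖f - g‖) := by
    have : ∑ ij ∈ Finset.Icc 1 n ×ˢ Finset.Icc 1 n, |f (x ij.1) - f (x ij.2)|
        ≤ ∑ ij ∈ Finset.Icc 1 n ×ˢ Finset.Icc 1 n,
          (|g (x ij.1) - g (x ij.2)| + 2 * R * ‖f - g‖) := by
      refine sum_le_sum fun ij _ => ?_
      have e : f (x ij.1) - f (x ij.2)
          = (g (x ij.1) - g (x ij.2)) + ((f (x ij.1) - g (x ij.1)) - (f (x ij.2) - g (x ij.2))) := by
        ring
      calc |f (x ij.1) - f (x ij.2)|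
          ≤ |g (x ij.1) - g (x ij.2)| + |(f (x ij.1) - g (x ij.1)) - (f (x ij.2) - g (x ij.2))| := by
            rw [e]; exact abs_add_le _ _
        _ ≤ |g (x ij.1) - g (x ij.2)| + (|f (x ij.1) - g (x ij.1)| + |f (x ij.2) - g (x ij.2)|) := by
            gcongr; exact abs_sub _ _
        _ ≤ |g (x ij.1) - g (x ij.2)| + (R * ‖f - g‖ + R * ‖f - g‖) := by
            gcongr <;> [exact hterm _; exact hterm _]
        _ = |g (x ij.1) - g (x ij.2)| + 2 * R * ‖f - g‖ := by ring
    refine this.trans ?_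
    rw [sum_add_distrib, sum_const, card_product, Nat.card_Icc]
    simp only [nsmul_eq_mul]
    push_cast
    ring_nf
    exact le_refl _
  unfold gW
  simp only [tw_apply']
  calc (∑ ij ∈ Finset.Icc 1 n ×ˢ Finset.Icc 1 n, |f (x ij.1) - f (x ij.2)|) / (n:ℝ)^2
      ≤ ((∑ ij ∈ Finset.Icc 1 n ×ˢ Finset.Icc 1 n, |g (x ij.1) - g (x ij.2)|)
        + (n:ℝ)^2 * (2 * R * ‖f - g‖)) / (n:ℝ)^2 := by gcongr
    _ = (∑ ij ∈ Finset.Icc 1 n ×ˢ Finset.Icc 1 n, |g (x ij.1) - g (x ij.2)|) / (n:ℝ)^2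
        + 2 * R * ‖f - g‖ := by field_simp

lemma spc_of_g (x : ℕ → X) (f : StrongDual ℝ X)
    (hg : Tendsto (fun n => gW x n (StrongDual.toWeakDual f)) atTop (nhds 0)) :
    StatPreCauchy fun n => f (x n) := by
  intro ε hε
  have hbound : ∀ n : ℕ, ((((Finset.Icc 1 n ×ˢ Finset.Icc 1 n).filter
      (fun ij => ε ≤ |f (x ij.1) - f (x ij.2)|)).card : ℝ) / (n:ℝ)^2)
      ≤ gW x n (StrongDual.toWeakDual f) / ε := by
    intro n
    rcases Nat.eq_zero_or_pos n with rfl | hn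
    · simp
      exact div_nonneg (gW_nonneg x 0 _) hε.le
    have hn2 : (0:ℝ) < (n:ℝ)^2 := by positivity
    rw [le_div_iff₀ hε]
    set P := (Finset.Icc 1 n ×ˢ Finset.Icc 1 n).filter
      (fun ij => ε ≤ |f (x ij.1) - f (x ij.2)|) with hPdef
    have h1 : (P.card : ℝ) * ε ≤ ∑ ij ∈ P, |f (x ij.1) - f (x ij.2)| := by
      have := Finset.card_nsmul_le_sum P (fun ij => |f (x ij.1) - f (x ij.2)|) ε
        (fun ij hij => (Finset.mem_filter.1 hij).2)
      simpa [nsmul_eq_mul] using this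
    have h2 : ∑ ij ∈ P, |f (x ij.1) - f (x ij.2)|
        ≤ ∑ ij ∈ Finset.Icc 1 n ×ˢ Finset.Icc 1 n, |f (x ij.1) - f (x ij.2)| :=
      Finset.sum_le_sum_of_subset_of_nonneg (Finset.filter_subset _ _)
        (fun _ _ _ => abs_nonneg _)
    have h3 : (P.card : ℝ) * ε ≤ gW x n (StrongDual.toWeakDual f) * (n:ℝ)^2 := by
      unfold gW
      simp only [tw_apply']
      rw [div_mul_cancel₀ _ hn2.ne']
      exact h1.trans h2
    calc (P.card : ℝ) / (n:ℝ)^2 * ε = (P.card : ℝ) * ε / (n:ℝ)^2 := by ring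
      _ ≤ gW x n (StrongDual.toWeakDual f) * (n:ℝ)^2 / (n:ℝ)^2 := by gcongr
      _ = gW x n (StrongDual.toWeakDual f) := by field_simp
  refine tendsto_of_tendsto_of_tendsto_of_le_of_le (g := fun _ => (0:ℝ))
    tendsto_const_nhds (by simpa using hg.div_const ε) (fun n => by positivity) hbound

lemma g_of_spc (x : ℕ → X) (R : ℝ) (hR : ∀ n, ‖x n‖ ≤ R) (hR0 : 0 ≤ R)
    (f : StrongDual ℝ X) (hf : ‖f‖ ≤ 1)
    (hs : StatPreCauchy fun n => f (x n)) :
    Tendsto (fun n => gW x n (StrongDual.toWeakDual f)) atTop (nhds 0) := by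
  rw [Metric.tendsto_atTop]
  intro ε hε
  have hδpos : (0:ℝ) < ε/(4*(R+1)) := by positivity
  have hcard := hs (ε/2) (by positivity)
  rw [Metric.tendsto_atTop] at hcard
  obtain ⟨N, hN⟩ := hcard (ε/(4*(R+1))) hδpos
  refine ⟨max N 1, fun n hn => ?_⟩
  have hn1 : 1 ≤ n := le_trans (le_max_right _ _) hn
  have hNn : N ≤ n := le_trans (le_max_left _ _) hn
  have hn2 : (0:ℝ) < (n:ℝ)^2 := by positivity
  set P := (Finset.Icc 1 n ×ˢ Finset.Icc 1 n).filter
    (fun ij => ε/2 ≤ |f (x ij.1) - f (x ij.2)|) with hPdef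
  have hq := hN n hNn
  rw [Real.dist_eq, sub_zero, abs_of_nonneg (by positivity)] at hq
  have hcard' : (P.card : ℝ) < ε/(4*(R+1)) * (n:ℝ)^2 := by
    rw [div_lt_iff₀ hn2] at hq
    exact hq
  have hterm2R : ∀ k l : ℕ, |f (x k) - f (x l)| ≤ 2*R := by
    intro k l
    have hk : ∀ m : ℕ, |f (x m)| ≤ R := by
      intro m
      calc |f (x m)| = ‖f (x m)‖ := (Real.norm_eq_abs _).symm
        _ ≤ ‖f‖ * ‖x m‖ := f.le_opNorm _
        _ ≤ 1 * R := by
            apply mul_le_mul hf (hR m) (norm_nonneg _) zero_le_one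
        _ = R := one_mul R
    calc |f (x k) - f (x l)| ≤ |f (x k)| + |f (x l)| := abs_sub _ _
      _ ≤ R + R := add_le_add (hk k) (hk l)
      _ = 2*R := by ring
  have hsplit : ∑ ij ∈ Finset.Icc 1 n ×ˢ Finset.Icc 1 n, |f (x ij.1) - f (x ij.2)|
      ≤ (P.card : ℝ) * (2*R) + (n:ℝ)^2 * (ε/2) := by
    rw [← Finset.sum_filter_add_sum_filter_not (Finset.Icc 1 n ×ˢ Finset.Icc 1 n)
      (fun ij => ε/2 ≤ |f (x ij.1) - f (x ij.2)|)]
    apply add_le_add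
    · have := Finset.sum_le_card_nsmul P (fun ij => |f (x ij.1) - f (x ij.2)|) (2*R)
        (fun ij _ => hterm2R _ _)
      simpa [nsmul_eq_mul] using this
    · set Q := (Finset.Icc 1 n ×ˢ Finset.Icc 1 n).filter
        (fun ij => ¬ (ε/2 ≤ |f (x ij.1) - f (x ij.2)|)) with hQdef
      have h1 : ∑ ij ∈ Q, |f (x ij.1) - f (x ij.2)| ≤ (Q.card : ℝ) * (ε/2) := by
        have := Finset.sum_le_card_nsmul Q (fun ij => |f (x ij.1) - f (x ij.2)|) (ε/2)
          (fun ij hij => le_of_lt (lt_of_not_ge (Finset.mem_filter.1 hij).2))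
        simpa [nsmul_eq_mul] using this
      have h2 : (Q.card : ℝ) ≤ (n:ℝ)^2 := by
        have := Finset.card_filter_le (Finset.Icc 1 n ×ˢ Finset.Icc 1 n)
          (fun ij => ¬ (ε/2 ≤ |f (x ij.1) - f (x ij.2)|))
        have hc : ((Finset.Icc 1 n ×ˢ Finset.Icc 1 n).card : ℝ) = (n:ℝ)^2 := by
          rw [Finset.card_product, Nat.card_Icc]
          push_cast
          ring
        calc (Q.card : ℝ) ≤ ((Finset.Icc 1 n ×ˢ Finset.Icc 1 n).card : ℝ) := by exact_mod_cast this
          _ = (n:ℝ)^2 := hc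
      calc ∑ ij ∈ Q, |f (x ij.1) - f (x ij.2)| ≤ (Q.card : ℝ) * (ε/2) := h1
        _ ≤ (n:ℝ)^2 * (ε/2) := by
            apply mul_le_mul_of_nonneg_right h2 (by positivity)
  rw [Real.dist_eq, sub_zero, abs_of_nonneg (gW_nonneg _ _ _)]
  unfold gW
  simp only [tw_apply']
  rw [div_lt_iff₀ hn2]
  have hδ : ε/(4*(R+1)) * (4*(R+1)) = ε := div_mul_cancel₀ ε (by positivity)
  nlinarith [hcard', hδ, hR0, hn2, hε, hsplit,
    mul_le_mul_of_nonneg_right hcard'.le (by positivity : (0:ℝ) ≤ 2*R)]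

end Aux

/-- If `B` (I)-generates the dual unit ball and `(x_n)` is a bounded sequence
such that `(f(x_n))ₙ` is statistically pre-Cauchy for every `f ∈ B`, then
`(f(x_n))ₙ` is statistically pre-Cauchy for every `f ∈ X*`. -/
theorem weakly_stat_pre_cauchy {X : Type*} [NormedAddCommGroup X]
    [NormedSpace ℝ X] [CompleteSpace X]
    (B : Set (StrongDual ℝ X)) (hB1 : B ⊆ Metric.closedBall (0 : StrongDual ℝ X) 1)
    (hI : IGenerates B (Metric.closedBall (0 : StrongDual ℝ X) 1))
    (x : ℕ → X) (R : ℝ) (hR : ∀ n, ‖x n‖ ≤ R)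
    (h : ∀ f ∈ B, StatPreCauchy fun n => f (x n)) :
    ∀ f : StrongDual ℝ X, StatPreCauchy fun n => f (x n) := by
  have hR0 : 0 ≤ R := (norm_nonneg (x 0)).trans (hR 0)
  have key : ∀ f : StrongDual ℝ X, f ∈ Metric.closedBall (0 : StrongDual ℝ X) 1 →
      Tendsto (fun n => gW x n (StrongDual.toWeakDual f)) atTop (nhds 0) := by
    intro f hfball
    rw [Metric.tendsto_atTop]
    intro ε hε
    have hε4pos : 0 < ε/4 := by positivity
    set Bn : ℕ → Set (StrongDual ℝ X) := fun m =>
      {g | g ∈ B ∧ ∀ n, m ≤ n → gW x n (StrongDual.toWeakDual g) ≤ ε/4} with hBn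
    have hBdecomp : B = ⋃ m, Bn m := by
      ext g
      simp only [Set.mem_iUnion, hBn, Set.mem_setOf_eq]
      constructor
      · intro hg
        have hg1 : ‖g‖ ≤ 1 := mem_closedBall_zero_iff.1 (hB1 hg)
        have ht := g_of_spc x R hR hR0 g hg1 (h g hg)
        rw [Metric.tendsto_atTop] at ht
        obtain ⟨m, hm⟩ := ht (ε/4) hε4pos
        refine ⟨m, hg, fun n hn => ?_⟩
        have h5 := hm n hn
        rw [Real.dist_eq, sub_zero, abs_of_nonneg (gW_nonneg _ _ _)] at h5
        exact h5.le
      · rintro ⟨m, hg, -⟩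
        exact hg
    have hIeq := hI Bn hBdecomp
    set C : ℕ → Set (WeakDual ℝ X) := fun m => {g | ∀ n, m ≤ n → gW x n g ≤ ε/4} with hC
    have hCclosed : ∀ m, IsClosed (C m) := by
      intro m
      have : C m = ⋂ n, ⋂ (_ : m ≤ n), {g : WeakDual ℝ X | gW x n g ≤ ε/4} := by
        ext g; simp [hC]
      rw [this]
      exact isClosed_iInter fun n => isClosed_iInter fun _ =>
        isClosed_le (gW_continuous x n) continuous_const
    have hCconvex : ∀ m, Convex ℝ (C m) := by
      intro m g₁ hg₁ g₂ hg₂ a b ha hb hab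
      intro n hn
      calc gW x n (a • g₁ + b • g₂) ≤ a * gW x n g₁ + b * gW x n g₂ :=
          gW_convex_ineq x n g₁ g₂ a b ha hb
        _ ≤ a * (ε/4) + b * (ε/4) := add_le_add
            (mul_le_mul_of_nonneg_left (hg₁ n hn) ha)
            (mul_le_mul_of_nonneg_left (hg₂ n hn) hb)
        _ = ε/4 := by rw [← add_mul, hab, one_mul]
    set D : ℕ → Set (StrongDual ℝ X) := fun m => ⇑StrongDual.toWeakDual ⁻¹' (C m) with hD
    have hsub : ∀ m, wstarClConvHull (Bn m) ⊆ D m := by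
      intro m g hg
      have himg : ⇑StrongDual.toWeakDual '' (Bn m) ⊆ C m := by
        rintro _ ⟨g', hg', rfl⟩
        exact fun n hn => hg'.2 n hn
      exact closure_minimal (convexHull_min himg (hCconvex m)) (hCclosed m) hg
    have hDconvex : ∀ m, Convex ℝ (D m) := by
      intro m g₁ hg₁ g₂ hg₂ a b ha hb hab
      have heq : StrongDual.toWeakDual (a • g₁ + b • g₂)
          = a • StrongDual.toWeakDual g₁ + b • StrongDual.toWeakDual g₂ := by
        simp [map_add, map_smul]
      simp only [hD, Set.mem_preimage] at hg₁ hg₂ ⊢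
      rw [heq]
      exact hCconvex m hg₁ hg₂ ha hb hab
    have hDmono : ∀ m m', m ≤ m' → D m ⊆ D m' := by
      intro m m' hmm' g hg n hn
      exact hg n (le_trans hmm' hn)
    have hUconv : Convex ℝ (⋃ m, D m) := by
      apply Directed.convex_iUnion ?_ hDconvex
      intro m m'
      exact ⟨max m m', hDmono m (max m m') (le_max_left _ _),
        hDmono m' (max m m') (le_max_right _ _)⟩
    have hfmem : f ∈ closure (⋃ m, D m) := by
      have h1 : f ∈ closure (convexHull ℝ (⋃ m, wstarClConvHull (Bn m))) := by
        rw [← hIeq]; exact hfball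
      exact closure_mono (convexHull_min (Set.iUnion_mono hsub) hUconv) h1
    obtain ⟨g, hgU, hdist⟩ := Metric.mem_closure_iff.1 hfmem (ε/(4*(R+1))) (by positivity)
    obtain ⟨m, hgm⟩ := Set.mem_iUnion.1 hgU
    refine ⟨m, fun n hn => ?_⟩
    rw [Real.dist_eq, sub_zero, abs_of_nonneg (gW_nonneg _ _ _)]
    have hb := hgm n hn
    have hlip := gW_lip x R hR hR0 n f g
    have hd : ‖f - g‖ < ε/(4*(R+1)) := by rwa [dist_eq_norm] at hdist
    have hδ : ε/(4*(R+1)) * (4*(R+1)) = ε := div_mul_cancel₀ ε (by positivity)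
    have hδpos : (0:ℝ) < ε/(4*(R+1)) := by positivity
    nlinarith [hb, hlip, hd, hδ, hδpos, hR0, hε, norm_nonneg (f - g),
      mul_le_mul_of_nonneg_left hd.le (by positivity : (0:ℝ) ≤ 2*R)]
  intro f
  rcases eq_or_ne f 0 with rfl | hf0
  · intro ε hε
    have hz : ∀ n : ℕ, ((((Finset.Icc 1 n ×ˢ Finset.Icc 1 n).filter
        (fun ij => ε ≤ |(0 : StrongDual ℝ X) (x ij.1) - (0 : StrongDual ℝ X) (x ij.2)|)).card : ℝ)
        / (n:ℝ)^2) = 0 := by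
      intro n
      rw [Finset.filter_false_of_mem, Finset.card_empty]
      · simp
      · intro ij _
        simp only [ContinuousLinearMap.zero_apply, sub_zero, abs_zero, not_le]
        exact hε
    simp only [hz]
    exact tendsto_const_nhds
  · have hfn : 0 < ‖f‖ := norm_pos_iff.2 hf0
    have hmem : ‖f‖⁻¹ • f ∈ Metric.closedBall (0 : StrongDual ℝ X) 1 := by
      rw [mem_closedBall_zero_iff, norm_smul, norm_inv, norm_norm,
        inv_mul_cancel₀ hfn.ne']
    have hkey := key _ hmem
    apply spc_of_g
    have hsc : ∀ n, gW x n (StrongDual.toWeakDual f)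
        = ‖f‖ * gW x n (StrongDual.toWeakDual (‖f‖⁻¹ • f)) := by
      intro n
      unfold gW
      rw [mul_div_assoc']
      congr 1
      rw [Finset.mul_sum]
      refine Finset.sum_congr rfl fun ij _ => ?_
      simp only [tw_apply']
      have happ : ∀ y : X, (‖f‖⁻¹ • f) y = ‖f‖⁻¹ * f y := fun y => rfl
      rw [happ, happ]
      rw [← mul_sub, abs_mul, abs_inv, abs_norm, ← mul_assoc,
        mul_inv_cancel₀ hfn.ne', one_mul]
    rw [show (fun n => gW x n (StrongDual.toWeakDual f))
      = fun n => ‖f‖ * gW x n (StrongDual.toWeakDual (‖f‖⁻¹ • f)) from funext hsc]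
    simpa using hkey.const_mul ‖f‖
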